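/- arXiv:2204.04311 — 3 statements merged into one kernel-verified Lean document; each statement's English description precedes it below -/
import Mathlib

section
/- Let G be a finite group, p a prime, P a Sylow p-subgroup of G, and H a subgroup of G containing P. Then the number of distinct conjugates of H containing P is at most |N_G(P) : P|. -/
open Pointwise

lemma conj_smul_self_aux {G : Type*} [Group G] {H : Subgroup G} {h : G} (hh : h ∈ H) :
    MulAut.conj h • H = H := by
  ext x
  rw [Subgroup.mem_pointwise_smul_iff_inv_smul_mem]
  show (MulAut.conj h)⁻¹ x ∈ H ↔ x ∈ H
  rw [MulAut.conj_inv_apply, H.mul_mem_cancel_right hh,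
    H.mul_mem_cancel_left (H.inv_mem hh)]

/-- The number of conjugates of `H` containing the Sylow `p`-subgroup `P` (where `P ≤ H`)
is at most `|N_G(P) : P|`. -/
theorem stmt1 {G : Type*} [Group G] [Finite G] {p : ℕ} [Fact p.Prime]
    (P : Sylow p G) (H : Subgroup G) (hPH : (P : Subgroup G) ≤ H) :
    Nat.card {K : Subgroup G // (∃ g : G, K = MulAut.conj g • H) ∧ (P : Subgroup G) ≤ K}
      ≤ (P : Subgroup G).relIndex (Subgroup.normalizer ((P : Subgroup G) : Set G)) := by
  rw [Subgroup.relIndex, Subgroup.index]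
  set N := Subgroup.normalizer ((P : Subgroup G) : Set G) with hN
  set S := (P : Subgroup G).subgroupOf N with hS
  have key : ∀ n : N, (P : Subgroup G) ≤ MulAut.conj (n : G) • H := by
    intro n
    have h1 : MulAut.conj (n : G) • (P : Subgroup G) = (P : Subgroup G) := by
      have := Sylow.smul_eq_iff_mem_normalizer.mpr n.2
      exact congrArg (Sylow.toSubgroup) this
    calc (P : Subgroup G) = MulAut.conj (n : G) • (P : Subgroup G) := h1.symm
      _ ≤ MulAut.conj (n : G) • H :=
        Subgroup.pointwise_smul_le_pointwise_smul_iff.mpr hPH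
  let f : N ⧸ S → {K : Subgroup G // (∃ g : G, K = MulAut.conj g • H) ∧ (P : Subgroup G) ≤ K} :=
    fun x => Quotient.liftOn' x
      (fun n => ⟨MulAut.conj (n : G) • H, ⟨n, rfl⟩, key n⟩)
      (by
        intro a b hab
        have hmem : ((a : G)⁻¹ * (b : G)) ∈ (P : Subgroup G) := by
          have h1 : a⁻¹ * b ∈ S := QuotientGroup.leftRel_apply.mp hab
          exact Subgroup.mem_subgroupOf.mp h1
        have hmemH : ((a : G)⁻¹ * (b : G)) ∈ H := hPH hmem
        apply Subtype.ext
        show MulAut.conj (a : G) • H = MulAut.conj (b : G) • H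
        have : (b : G) = (a : G) * ((a : G)⁻¹ * (b : G)) := by group
        rw [this, map_mul, mul_smul, conj_smul_self_aux hmemH])
  refine Nat.card_le_card_of_surjective f ?_
  rintro ⟨K, ⟨g, hg⟩, hPK⟩
  have hP' : ((g⁻¹ • P : Sylow p G) : Subgroup G) ≤ H := by
    rw [Sylow.coe_subgroup_smul]
    calc MulAut.conj g⁻¹ • (P : Subgroup G) ≤ MulAut.conj g⁻¹ • K :=
          Subgroup.pointwise_smul_le_pointwise_smul_iff.mpr hPK
      _ = H := by rw [hg, ← mul_smul, ← map_mul, inv_mul_cancel, map_one, one_smul]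
  obtain ⟨h, hh⟩ := MulAction.exists_smul_eq H ((g⁻¹ • P).subtype hP') (P.subtype hPH)
  rw [Sylow.smul_subtype] at hh
  have hsmul : ((h : G) * g⁻¹) • P = P := by
    have := Sylow.subtype_injective hh
    rwa [Subgroup.smul_def, smul_smul] at this
  have hn : ((h : G) * g⁻¹)⁻¹ ∈ N :=
    N.inv_mem (Sylow.smul_eq_iff_mem_normalizer.mp hsmul)
  refine ⟨QuotientGroup.mk ⟨((h : G) * g⁻¹)⁻¹, hn⟩, ?_⟩
  apply Subtype.ext
  show MulAut.conj (((h : G) * g⁻¹)⁻¹) • H = K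
  have hhH : (h : G)⁻¹ ∈ H := H.inv_mem h.2
  rw [mul_inv_rev, inv_inv, map_mul, mul_smul, conj_smul_self_aux hhH, hg]
end

section
/- Let G be a finite group, let P be a proper subgroup, let M be the set of maximal subgroups of G containing P, and let x ∈ G. If the sum over H ∈ M of fpr(x, G/H) is strictly less than 1, where fpr(x, G/H) = |x^G ∩ H|/|x^G|, then there exists g ∈ G such that G = ⟨P, x^g⟩. -/
/-- If the sum of fixed point ratios `|x^G ∩ H|/|x^G|` over the maximal subgroups `H`
containing the proper subgroup `P` is less than 1, then `G = ⟨P, x^g⟩` for some `g`. -/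
theorem stmt4 {G : Type*} [Group G] [Finite G] (P : Subgroup G) (hP : P ≠ ⊤)
    (M : Finset (Subgroup G)) (hM : ∀ H : Subgroup G, H ∈ M ↔ (IsCoatom H ∧ P ≤ H)) (x : G)
    (h : ∑ H ∈ M, ((Nat.card {y : G // IsConj x y ∧ y ∈ H} : ℚ)
        / (Nat.card {y : G // IsConj x y} : ℚ)) < 1) :
    ∃ g : G, P ⊔ Subgroup.zpowers (g⁻¹ * x * g) = ⊤ := by
  classical
  have := Fintype.ofFinite G
  set C : Finset G := Finset.univ.filter (IsConj x) with hC
  have hcardC : (Nat.card {y : G // IsConj x y}) = C.card := by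
    rw [Nat.card_eq_fintype_card, Fintype.card_subtype]
  have hcardH : ∀ H : Subgroup G,
      (Nat.card {y : G // IsConj x y ∧ y ∈ H}) = (C.filter (· ∈ H)).card := by
    intro H
    rw [Nat.card_eq_fintype_card, Fintype.card_subtype]
    congr 1
    ext y
    simp [hC, and_assoc]
  have hxC : x ∈ C := by simp only [hC, Finset.mem_filter, Finset.mem_univ, true_and]; exact IsConj.refl x
  have hCpos : 0 < C.card := Finset.card_pos.2 ⟨x, hxC⟩
  -- turn the rational inequality into a natural number inequality
  have hnat : ∑ H ∈ M, (C.filter (· ∈ H)).card < C.card := by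
    have h' : ∑ H ∈ M, ((C.filter (· ∈ H)).card : ℚ) / (C.card : ℚ) < 1 := by
      convert h using 2 with H hH
      rw [hcardH H, hcardC]
    rw [← Finset.sum_div, div_lt_one (by exact_mod_cast hCpos)] at h'
    exact_mod_cast h'
  -- find a conjugate of x lying in no H ∈ M
  have hexists : ∃ y ∈ C, ∀ H ∈ M, y ∉ H := by
    by_contra hcon
    push_neg at hcon
    have hsub : C ⊆ M.biUnion (fun H => C.filter (· ∈ H)) := by
      intro y hy
      obtain ⟨H, hH, hyH⟩ := hcon y hy
      exact Finset.mem_biUnion.2 ⟨H, hH, Finset.mem_filter.2 ⟨hy, hyH⟩⟩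
    have := (Finset.card_le_card hsub).trans (Finset.card_biUnion_le)
    omega
  obtain ⟨y, hyC, hy⟩ := hexists
  have hconj : IsConj x y := by
    simpa [hC] using hyC
  obtain ⟨c, hc⟩ := isConj_iff.1 hconj
  refine ⟨c⁻¹, ?_⟩
  have hy' : (c⁻¹)⁻¹ * x * c⁻¹ = y := by
    rw [inv_inv]; exact hc
  rw [hy']
  by_contra htop
  obtain ⟨H, hHco, hle⟩ := (eq_top_or_exists_le_coatom (P ⊔ Subgroup.zpowers y)).resolve_left htop
  have hHM : H ∈ M := (hM H).2 ⟨hHco, le_trans le_sup_left hle⟩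
  exact hy H hHM (hle (Subgroup.mem_sup_right (Subgroup.mem_zpowers y)))
end

section
/- For every real number q ≥ 3 and every even integer n ≥ 12, the inequality (n/4)·(2q² + 1)·q^{−n/2} + 1/(q−1) + q^{2⌊n/4⌋ − n}·q²/(q² − 1) < 42/43 holds. -/
lemma aux12 (m : ℕ) (hm : 6 ≤ m) : (m : ℝ) * 729 ≤ 6 * 3 ^ m := by
  induction m, hm using Nat.le_induction with
  | base => norm_num
  | succ m hm ih =>
    have h3 : (729 : ℝ) ≤ 3 ^ m := by
      calc (729:ℝ) = 3^6 := by norm_num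
      _ ≤ 3^m := pow_le_pow_right₀ (by norm_num) hm
    push_cast
    rw [pow_succ]
    nlinarith

/-- The numerical estimate used to bound `Σ₂(x)` in the symplectic case: for real `q ≥ 3`
and even `n ≥ 12`,
`(n/4)(2q²+1)q^{-n/2} + 1/(q-1) + q^{2⌊n/4⌋-n}·q²/(q²-1) < 42/43`. -/
theorem stmt12 (q : ℝ) (hq : 3 ≤ q) (n : ℕ) (hn : 12 ≤ n) (hev : Even n) :
    (n / 4 : ℝ) * (2 * q ^ 2 + 1) * q ^ (-((n : ℤ) / 2)) + 1 / (q - 1)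
      + q ^ (2 * ((n : ℤ) / 4) - (n : ℤ)) * (q ^ 2 / (q ^ 2 - 1)) < 42 / 43 := by
  obtain ⟨m, rfl⟩ := hev
  have hm : 6 ≤ m := by omega
  have hq0 : (0:ℝ) < q := by linarith
  have hq1 : (1:ℝ) < q := by linarith
  have hq2 : (9:ℝ) ≤ q ^ 2 := by nlinarith
  have e1 : -(((m + m : ℕ) : ℤ) / 2) = -(m : ℤ) := by push_cast; omega
  have e2 : 2 * (((m + m : ℕ) : ℤ) / 4) - ((m + m : ℕ) : ℤ) ≤ -(m : ℤ) := by
    push_cast; omega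
  rw [e1]
  have hzn : q ^ (-(m : ℤ)) = (q ^ m)⁻¹ := by
    rw [zpow_neg, zpow_natCast]
  have hPpos : (0:ℝ) < q ^ m := pow_pos hq0 m
  have hP3 : (3:ℝ) ^ m ≤ q ^ m := pow_le_pow_left₀ (by norm_num) hq m
  have h3m : (729:ℝ) ≤ 3 ^ m := by
    calc (729:ℝ) = 3 ^ 6 := by norm_num
    _ ≤ 3 ^ m := pow_le_pow_right₀ (by norm_num) hm
  have hsplit : q ^ m = q ^ 2 * q ^ (m - 2) := by
    rw [← pow_add]; congr 1; omega
  have hsplit3 : (3:ℝ) ^ m = 9 * 3 ^ (m - 2) := by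
    rw [show (9:ℝ) = 3 ^ 2 by norm_num, ← pow_add]; congr 1; omega
  have hq2m : (3:ℝ) ^ (m - 2) ≤ q ^ (m - 2) := pow_le_pow_left₀ (by norm_num) hq _
  have h3pos : (0:ℝ) < (3:ℝ) ^ (m - 2) := by positivity
  -- term 1
  have t1 : ((m + m : ℕ) : ℝ) / 4 * (2 * q ^ 2 + 1) * (q ^ m)⁻¹ ≤ 1 / 9 := by
    rw [← div_eq_mul_inv, div_le_div_iff₀ hPpos (by norm_num)]
    have haux : (m : ℝ) * 729 ≤ 6 * 3 ^ m := aux12 m hm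
    rw [hsplit3] at haux
    push_cast
    nlinarith [mul_le_mul_of_nonneg_left hq2m (by positivity : (0:ℝ) ≤ q ^ 2),
      mul_le_mul_of_nonneg_right haux (by positivity : (0:ℝ) ≤ q ^ 2),
      mul_le_mul_of_nonneg_left hq2 h3pos.le]
  -- term 2
  have t2 : 1 / (q - 1) ≤ 1 / 2 := one_div_le_one_div_of_le (by norm_num) (by linarith)
  -- term 3
  have t3 : q ^ (2 * (((m + m : ℕ) : ℤ) / 4) - ((m + m : ℕ) : ℤ)) * (q ^ 2 / (q ^ 2 - 1))
      ≤ 1 / 648 := by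
    have h1 : q ^ (2 * (((m + m : ℕ) : ℤ) / 4) - ((m + m : ℕ) : ℤ)) ≤ (q ^ m)⁻¹ := by
      rw [← hzn]
      exact zpow_le_zpow_right₀ hq1.le e2
    have h2 : q ^ 2 / (q ^ 2 - 1) ≤ 9 / 8 := by
      rw [div_le_div_iff₀ (by nlinarith) (by norm_num)]
      nlinarith
    have h4 : (q ^ m)⁻¹ ≤ 1 / 729 := by
      rw [inv_eq_one_div]
      exact one_div_le_one_div_of_le (by norm_num) (by linarith)
    calc q ^ (2 * (((m + m : ℕ) : ℤ) / 4) - ((m + m : ℕ) : ℤ)) * (q ^ 2 / (q ^ 2 - 1))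
        ≤ (q ^ m)⁻¹ * (9 / 8) := by
          apply mul_le_mul h1 h2 (div_nonneg (by positivity) (by nlinarith)) (by positivity)
      _ ≤ (1 / 729) * (9 / 8) := by
          apply mul_le_mul_of_nonneg_right h4 (by norm_num)
      _ = 1 / 648 := by norm_num
  rw [hzn]
  linarith
end
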